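/- Inclusion–exclusion for restricted walks: for all p ∈ Z^2 and even m^+, m^-, w'_2(m^+, m^-; p) = Σ_{k,l ≥ 0} (-1)^{k+l} w'_2(k, l; m^+, m^-; p). -/

import Mathlib

/-- `w'_2(m⁺, m⁻; p)` with `m⁺ = 2·np`, `m⁻ = 2·nn`: the number of walks in
`ℤ²` from the origin to `p` whose `m⁺` positive steps, grouped in pairs
`(a_{u^1}, a_{u^2})` indexed by `u ∈ Fin np`, all precede the `m⁻` negative
steps, grouped in pairs `(b_{v^1}, b_{v^2})` indexed by `v ∈ Fin nn`, and
which satisfy `a_{u^1} ≥ a_{u^2}` and `b_{v^1} ≥ b_{v^2}` for all `u, v`.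
A walk is encoded by the direction data
`(a, b) : (Fin np → Fin 2 → Fin 2) × (Fin nn → Fin 2 → Fin 2)`. -/
noncomputable def W2count (np nn : ℕ) (p : Fin 2 → ℤ) : ℕ :=
  Nat.card {ab : (Fin np → Fin 2 → Fin 2) × (Fin nn → Fin 2 → Fin 2) //
    (∀ u, ab.1 u 1 ≤ ab.1 u 0) ∧ (∀ v, ab.2 v 1 ≤ ab.2 v 0) ∧
    ∀ j : Fin 2,
      ((Finset.univ.filter fun q : Fin np × Fin 2 => ab.1 q.1 q.2 = j).card : ℤ) -
        ((Finset.univ.filter fun q : Fin nn × Fin 2 => ab.2 q.1 q.2 = j).card : ℤ) = p j}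

/-- `w'_2(k, l; m⁺, m⁻; p)` with `m⁺ = 2·np`, `m⁻ = 2·nn`: the number of
choices of `K ⊆ U` with `|K| = k`, `L ⊆ V` with `|L| = l`, together with a
walk in `W^*(m⁺, m⁻; p)` (positive steps preceding negative steps, no
monotonicity restriction) such that `(a_{u^1}, a_{u^2}) = (1, 2)` (0-indexed
directions `(0, 1)`) for all `u ∈ K` and `(b_{v^1}, b_{v^2}) = (1, 2)` for all
`v ∈ L`. -/
noncomputable def W2klCount (np nn k l : ℕ) (p : Fin 2 → ℤ) : ℕ :=
  Nat.card {x : Finset (Fin np) × Finset (Fin nn) ×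
      (Fin np → Fin 2 → Fin 2) × (Fin nn → Fin 2 → Fin 2) //
    x.1.card = k ∧ x.2.1.card = l ∧
    (∀ u ∈ x.1, x.2.2.1 u 0 = 0 ∧ x.2.2.1 u 1 = 1) ∧
    (∀ v ∈ x.2.1, x.2.2.2 v 0 = 0 ∧ x.2.2.2 v 1 = 1) ∧
    ∀ j : Fin 2,
      ((Finset.univ.filter fun q : Fin np × Fin 2 => x.2.2.1 q.1 q.2 = j).card : ℤ) -
        ((Finset.univ.filter fun q : Fin nn × Fin 2 => x.2.2.2 q.1 q.2 = j).card : ℤ) = p j}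

open Finset

private def badSet {n : ℕ} (f : Fin n → Fin 2 → Fin 2) : Finset (Fin n) :=
  univ.filter fun u => f u 0 = 0 ∧ f u 1 = 1

private lemma forall_le_iff_bad_empty {n : ℕ} (f : Fin n → Fin 2 → Fin 2) :
    (∀ u, f u 1 ≤ f u 0) ↔ badSet f = ∅ := by
  have h : ∀ x y : Fin 2, (y ≤ x) ↔ ¬(x = 0 ∧ y = 1) := by decide
  simp [badSet, Finset.filter_eq_empty_iff, ← h]

private lemma subset_bad_iff {n : ℕ} (f : Fin n → Fin 2 → Fin 2) (K : Finset (Fin n)) :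
    (∀ u ∈ K, f u 0 = 0 ∧ f u 1 = 1) ↔ K ⊆ badSet f := by
  simp [badSet, Finset.subset_iff]

private lemma count_subsets {n k : ℕ} (s : Finset (Fin n)) :
    (univ.filter fun K : Finset (Fin n) => K.card = k ∧ K ⊆ s).card = s.card.choose k := by
  rw [← Finset.card_powersetCard]
  congr 1
  ext K
  simp [Finset.mem_powersetCard, and_comm]

private lemma alt_sum (n c : ℕ) (h : c ≤ n) :
    ∑ k ∈ range (n + 1), (-1 : ℤ) ^ k * c.choose k = if c = 0 then 1 else 0 := by
  rw [← Int.alternating_sum_range_choose (n := c)]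
  refine (Finset.sum_subset (Finset.range_subset_range.2 (by omega)) ?_).symm
  intro x hx hx'
  simp only [mem_range] at hx hx'
  rw [Nat.choose_eq_zero_of_lt (by omega)]
  simp



/-- **Lemma 10 (inclusion–exclusion)**: for all `p ∈ ℤ²` and even
`m⁺ = 2·np`, `m⁻ = 2·nn`,
`w'_2(m⁺, m⁻; p) = Σ_{k,l ≥ 0} (-1)^{k+l} w'_2(k, l; m⁺, m⁻; p)`
(the terms with `k > np` or `l > nn` vanish). -/
theorem inclusion_exclusion_restricted_walks (np nn : ℕ) (p : Fin 2 → ℤ) :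
    (W2count np nn p : ℤ) =
      ∑ k ∈ Finset.range (np + 1), ∑ l ∈ Finset.range (nn + 1),
        (-1) ^ (k + l) * (W2klCount np nn k l p : ℤ) := by
  classical
  set E : ((Fin np → Fin 2 → Fin 2) × (Fin nn → Fin 2 → Fin 2)) → Prop := fun ab =>
    ∀ j : Fin 2,
      ((Finset.univ.filter fun q : Fin np × Fin 2 => ab.1 q.1 q.2 = j).card : ℤ) -
        ((Finset.univ.filter fun q : Fin nn × Fin 2 => ab.2 q.1 q.2 = j).card : ℤ) = p j
    with hEdef
  have hW : W2count np nn p =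
      ((univ.filter fun ab : (Fin np → Fin 2 → Fin 2) × (Fin nn → Fin 2 → Fin 2) =>
        E ab ∧ badSet ab.1 = ∅ ∧ badSet ab.2 = ∅)).card := by
    rw [W2count, Nat.card_eq_fintype_card, Fintype.card_subtype]
    congr 1
    apply Finset.filter_congr
    intro ab _
    rw [forall_le_iff_bad_empty, forall_le_iff_bad_empty]
    constructor
    · rintro ⟨h1, h2, h3⟩; exact ⟨h3, h1, h2⟩
    · rintro ⟨h1, h2, h3⟩; exact ⟨h2, h3, h1⟩
  have hKL : ∀ k l : ℕ, W2klCount np nn k l p =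
      ∑ ab ∈ univ.filter E,
        (badSet ab.1).card.choose k * (badSet ab.2).card.choose l := by
    intro k l
    rw [W2klCount, Nat.card_eq_fintype_card, Fintype.card_subtype, Finset.card_filter,
      Fintype.sum_prod_type, Finset.sum_comm, Fintype.sum_prod_type, Finset.sum_comm,
      Finset.sum_filter]
    refine Finset.sum_congr rfl fun ab _ => ?_
    by_cases hE : E ab
    · rw [if_pos hE]
      calc (∑ L : Finset (Fin nn), ∑ K : Finset (Fin np),
            if K.card = k ∧ L.card = l ∧ (∀ u ∈ K, ab.1 u 0 = 0 ∧ ab.1 u 1 = 1) ∧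
              (∀ v ∈ L, ab.2 v 0 = 0 ∧ ab.2 v 1 = 1) ∧ E ab then 1 else 0)
          = ∑ L : Finset (Fin nn), ∑ K : Finset (Fin np),
            (if K.card = k ∧ K ⊆ badSet ab.1 then 1 else 0) *
              (if L.card = l ∧ L ⊆ badSet ab.2 then 1 else 0) := by
            refine Finset.sum_congr rfl fun L _ => Finset.sum_congr rfl fun K _ => ?_
            simp only [subset_bad_iff]
            split_ifs with h1 h2 h3 h4 <;> first | rfl | (exfalso; tauto)
        _ = (∑ L : Finset (Fin nn), if L.card = l ∧ L ⊆ badSet ab.2 then 1 else 0) *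
              (∑ K : Finset (Fin np), if K.card = k ∧ K ⊆ badSet ab.1 then 1 else 0) := by
            rw [Finset.sum_mul_sum]
            exact Finset.sum_congr rfl fun L _ => Finset.sum_congr rfl fun K _ =>
              (mul_comm _ _)
        _ = (badSet ab.1).card.choose k * (badSet ab.2).card.choose l := by
            rw [Finset.sum_boole, Finset.sum_boole, count_subsets, count_subsets, mul_comm]
            norm_num
    · rw [if_neg hE]
      refine Finset.sum_eq_zero fun L _ => Finset.sum_eq_zero fun K _ => ?_
      rw [if_neg (by tauto)]
  rw [hW]
  symm
  have swap : ∀ (f : ℕ → ℕ →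
      ((Fin np → Fin 2 → Fin 2) × (Fin nn → Fin 2 → Fin 2)) → ℤ),
      (∑ k ∈ range (np + 1), ∑ l ∈ range (nn + 1), ∑ ab ∈ univ.filter E, f k l ab)
        = ∑ ab ∈ univ.filter E, ∑ k ∈ range (np + 1), ∑ l ∈ range (nn + 1), f k l ab := by
    intro f
    calc (∑ k ∈ range (np + 1), ∑ l ∈ range (nn + 1), ∑ ab ∈ univ.filter E, f k l ab)
        = ∑ l ∈ range (nn + 1), ∑ k ∈ range (np + 1), ∑ ab ∈ univ.filter E, f k l ab :=
          Finset.sum_comm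
      _ = ∑ l ∈ range (nn + 1), ∑ ab ∈ univ.filter E, ∑ k ∈ range (np + 1), f k l ab :=
          Finset.sum_congr rfl fun l _ => Finset.sum_comm
      _ = ∑ ab ∈ univ.filter E, ∑ l ∈ range (nn + 1), ∑ k ∈ range (np + 1), f k l ab :=
          Finset.sum_comm
      _ = ∑ ab ∈ univ.filter E, ∑ k ∈ range (np + 1), ∑ l ∈ range (nn + 1), f k l ab :=
          Finset.sum_congr rfl fun ab _ => Finset.sum_comm
  calc (∑ k ∈ Finset.range (np + 1), ∑ l ∈ Finset.range (nn + 1),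
        (-1 : ℤ) ^ (k + l) * (W2klCount np nn k l p : ℤ))
      = ∑ k ∈ range (np + 1), ∑ l ∈ range (nn + 1), ∑ ab ∈ univ.filter E,
          (-1 : ℤ) ^ (k + l) *
            ((badSet ab.1).card.choose k * (badSet ab.2).card.choose l) := by
        refine Finset.sum_congr rfl fun k _ => Finset.sum_congr rfl fun l _ => ?_
        rw [hKL k l]
        push_cast
        rw [Finset.mul_sum]
    _ = ∑ ab ∈ univ.filter E, ∑ k ∈ range (np + 1), ∑ l ∈ range (nn + 1),
          (-1 : ℤ) ^ (k + l) *
            ((badSet ab.1).card.choose k * (badSet ab.2).card.choose l) := swap _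
    _ = ∑ ab ∈ univ.filter E,
          (if badSet ab.1 = ∅ ∧ badSet ab.2 = ∅ then (1 : ℤ) else 0) := by
        refine Finset.sum_congr rfl fun ab _ => ?_
        have h1 : (badSet ab.1).card ≤ np :=
          (Finset.card_le_univ _).trans (by simp)
        have h2 : (badSet ab.2).card ≤ nn :=
          (Finset.card_le_univ _).trans (by simp)
        calc (∑ k ∈ range (np + 1), ∑ l ∈ range (nn + 1),
              (-1 : ℤ) ^ (k + l) *
                ((badSet ab.1).card.choose k * (badSet ab.2).card.choose l))
            = (∑ k ∈ range (np + 1), (-1 : ℤ) ^ k * (badSet ab.1).card.choose k) *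
                (∑ l ∈ range (nn + 1), (-1 : ℤ) ^ l * (badSet ab.2).card.choose l) := by
              rw [Finset.sum_mul_sum]
              refine Finset.sum_congr rfl fun k _ => Finset.sum_congr rfl fun l _ => ?_
              rw [pow_add]; ring
          _ = (if (badSet ab.1).card = 0 then (1:ℤ) else 0) *
                (if (badSet ab.2).card = 0 then (1:ℤ) else 0) := by
              rw [alt_sum np _ h1, alt_sum nn _ h2]
          _ = (if badSet ab.1 = ∅ ∧ badSet ab.2 = ∅ then (1 : ℤ) else 0) := by
              simp only [Finset.card_eq_zero]
              rw [ite_zero_mul_ite_zero, mul_one]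
    _ = (((univ.filter E).filter
          fun ab => badSet ab.1 = ∅ ∧ badSet ab.2 = ∅).card : ℤ) := by
        rw [Finset.sum_boole]
    _ = (((univ.filter fun ab => E ab ∧ badSet ab.1 = ∅ ∧ badSet ab.2 = ∅)).card : ℤ) := by
        rw [Finset.filter_filter]
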